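/- On the group Aff₊(ℝ), define f < g if and only if f(0) < g(0), or f(0) = g(0) and f(1) < g(1). Then < is a left order on Aff₊(ℝ) which satisfies property (P₁) but is not Archimedean. -/

import Mathlib

noncomputable section

/-- `f : ℝ ≃o ℝ` is an orientation-preserving affine map `x ↦ a*x + b`, `a > 0`. -/
def IsAffinePos (f : ℝ ≃o ℝ) : Prop :=
  ∃ a b : ℝ, 0 < a ∧ ∀ x : ℝ, f x = a * x + b

/-- The group `Aff₊(ℝ)` of orientation-preserving affine maps of the real line,
as a subgroup of the group of order-isomorphisms of `ℝ`. -/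
def AffPlus : Subgroup (ℝ ≃o ℝ) where
  carrier := {f | IsAffinePos f}
  one_mem' := ⟨1, 0, one_pos, fun x => by simp⟩
  mul_mem' := by
    rintro f g ⟨a, b, ha, hf⟩ ⟨c, d, hc, hg⟩
    refine ⟨a * c, a * d + b, mul_pos ha hc, fun x => ?_⟩
    have : (f * g) x = f (g x) := rfl
    rw [this, hg, hf]; ring
  inv_mem' := by
    rintro f ⟨a, b, ha, hf⟩
    refine ⟨a⁻¹, -b / a, inv_pos.2 ha, fun x => ?_⟩
    have h1 : f⁻¹ x = f.symm x := rfl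
    apply f.injective
    rw [h1, f.apply_symm_apply, hf]
    field_simp
    ring

variable {G : Type*} [Group G]

/-- The sequence `(s n)_{n ≥ 1}` is (strictly) increasing for the order `lt`. -/
def SeqIncr (lt : G → G → Prop) (s : ℕ → G) : Prop :=
  ∀ n : ℕ, 1 ≤ n → lt (s n) (s (n + 1))

/-- The sequence `(s n)_{n ≥ 1}` is bounded: there is `h` with `h⁻¹ < s n < h`. -/
def SeqBounded (lt : G → G → Prop) (s : ℕ → G) : Prop :=
  ∃ h : G, ∀ n : ℕ, 1 ≤ n → lt h⁻¹ (s n) ∧ lt (s n) h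

/-- The sequence `(s n)_{n ≥ 1}` is unbounded from above: it has no upper bound. -/
def SeqUnboundedAbove (lt : G → G → Prop) (s : ℕ → G) : Prop :=
  ∀ h : G, ∃ n : ℕ, 1 ≤ n ∧ lt h (s n)

/-- Property `(P₁)`: for every `g` such that `(gⁿ)_{n≥1}` is increasing and bounded and
every `δ` for which there is `M` with `δ gᵏ > gᵐ` for all `k, m > M`, for all
sufficiently large `k` either `(gⁿ δ gᵏ)_{n≥1}` or `(g⁻ⁿ δ gᵏ)_{n≥1}` is increasing and
unbounded from above. -/
def PropertyP1 (lt : G → G → Prop) : Prop :=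
  ∀ g δ : G,
    SeqIncr lt (fun n => g ^ n) → SeqBounded lt (fun n => g ^ n) →
    (∃ M : ℕ, ∀ k m : ℕ, M < k → M < m → lt (g ^ m) (δ * g ^ k)) →
    ∃ K : ℕ, ∀ k : ℕ, K ≤ k →
      (SeqIncr lt (fun n => g ^ n * δ * g ^ k) ∧
        SeqUnboundedAbove lt (fun n => g ^ n * δ * g ^ k)) ∨
      (SeqIncr lt (fun n => g⁻¹ ^ n * δ * g ^ k) ∧
        SeqUnboundedAbove lt (fun n => g⁻¹ ^ n * δ * g ^ k))

/-- A left-ordered group is Archimedean if for any elements `f, g > 1` some power of `g`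
exceeds `f`. -/
def ArchimedeanOrderLt (lt : G → G → Prop) : Prop :=
  ∀ f g : G, lt 1 f → lt 1 g → ∃ n : ℕ, lt f (g ^ n)

/-- The order on `Aff₊(ℝ)` comparing first the values at `0`, then the values at `1`. -/
def affLt (f g : ↥AffPlus) : Prop :=
  (f : ℝ ≃o ℝ) 0 < (g : ℝ ≃o ℝ) 0 ∨
    ((f : ℝ ≃o ℝ) 0 = (g : ℝ ≃o ℝ) 0 ∧ (f : ℝ ≃o ℝ) 1 < (g : ℝ ≃o ℝ) 1)


section AuxLemmas

/-- Powers of an affine map written with fixed-point parameter `L`. -/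
lemma pow_aff (f : ℝ ≃o ℝ) (a L : ℝ) (hf : ∀ x, f x = a * x + (1 - a) * L) :
    ∀ (n : ℕ) (x : ℝ), (f ^ n) x = a ^ n * x + (1 - a ^ n) * L := by
  intro n
  induction n with
  | zero => intro x; simp
  | succ n ih =>
    intro x
    rw [pow_succ']
    have h2 : (f * f ^ n) x = f ((f ^ n) x) := rfl
    rw [h2, ih, hf]; ring

lemma inv_aff (f : ℝ ≃o ℝ) (a L : ℝ) (ha : 0 < a)
    (hf : ∀ x, f x = a * x + (1 - a) * L) :
    ∀ x, f⁻¹ x = a⁻¹ * x + (1 - a⁻¹) * L := by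
  intro x
  have h1 : f⁻¹ x = f.symm x := rfl
  apply f.injective
  rw [h1, f.apply_symm_apply, hf]
  field_simp
  ring

def affMap (a b : ℝ) (ha : 0 < a) : ℝ ≃o ℝ where
  toFun x := a * x + b
  invFun y := (y - b) / a
  left_inv x := by field_simp; ring
  right_inv y := by field_simp; ring
  map_rel_iff' := by
    intro x y
    simp only [Equiv.coe_fn_mk]
    rw [add_le_add_iff_right, mul_le_mul_iff_right₀ ha]

lemma affMap_apply (a b : ℝ) (ha : 0 < a) (x : ℝ) : affMap a b ha x = a * x + b := rfl

lemma affPlus_coe_pow (g : ↥AffPlus) (n : ℕ) :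
    ((g ^ n : ↥AffPlus) : ℝ ≃o ℝ) = (g : ℝ ≃o ℝ) ^ n := by
  push_cast; ring

lemma affPlus_ext (f g : ↥AffPlus) (h0 : (f : ℝ ≃o ℝ) 0 = (g : ℝ ≃o ℝ) 0)
    (h1 : (f : ℝ ≃o ℝ) 1 = (g : ℝ ≃o ℝ) 1) : f = g := by
  obtain ⟨a, b, ha, hf⟩ := f.2
  obtain ⟨c, d, hc, hgg⟩ := g.2
  rw [hf, hgg] at h0 h1
  have hbd : b = d := by linarith
  have hac : a = c := by linarith
  apply Subtype.ext
  ext x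
  rw [hf, hgg, hbd, hac]

lemma affLt_left_invariant : ∀ c a b : ↥AffPlus, affLt a b → affLt (c * a) (c * b) := by
  intro c a b hab
  have e1 : ((c * a : ↥AffPlus) : ℝ ≃o ℝ) = (c : ℝ ≃o ℝ) * (a : ℝ ≃o ℝ) := rfl
  have e2 : ((c * b : ↥AffPlus) : ℝ ≃o ℝ) = (c : ℝ ≃o ℝ) * (b : ℝ ≃o ℝ) := rfl
  rcases hab with h | ⟨he, h⟩
  · exact Or.inl (by rw [e1, e2]; exact (c : ℝ ≃o ℝ).strictMono h)
  · refine Or.inr ⟨?_, ?_⟩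
    · rw [e1, e2]; exact congrArg _ he
    · rw [e1, e2]; exact (c : ℝ ≃o ℝ).strictMono h

end AuxLemmas

/-- The order `f < g` iff `f(0) < g(0)`, or `f(0) = g(0)` and
`f(1) < g(1)`, is a left order on `Aff₊(ℝ)` which satisfies property `(P₁)` but is not
Archimedean. -/
theorem affPlus_order_P1_not_archimedean :
    IsStrictTotalOrder ↥AffPlus affLt ∧
      (∀ c a b : ↥AffPlus, affLt a b → affLt (c * a) (c * b)) ∧
      PropertyP1 affLt ∧ ¬ ArchimedeanOrderLt affLt := by
  refine ⟨?_, affLt_left_invariant, ?_, ?_⟩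
  · -- strict total order
    refine { trichotomous := ?_, irrefl := ?_, trans := ?_ }
    · intro f g hfg hgf
      rcases lt_trichotomy ((f : ℝ ≃o ℝ) 0) ((g : ℝ ≃o ℝ) 0) with h | h | h
      · exact (hfg (Or.inl h)).elim
      · rcases lt_trichotomy ((f : ℝ ≃o ℝ) 1) ((g : ℝ ≃o ℝ) 1) with h1 | h1 | h1
        · exact (hfg (Or.inr ⟨h, h1⟩)).elim
        · exact affPlus_ext f g h h1
        · exact (hgf (Or.inr ⟨h.symm, h1⟩)).elim
      · exact (hgf (Or.inl h)).elim
    · rintro f (h | ⟨-, h⟩) <;> exact lt_irrefl _ h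
    · rintro f g k (h1 | ⟨e1, h1⟩) (h2 | ⟨e2, h2⟩)
      · exact Or.inl (h1.trans h2)
      · exact Or.inl (e2 ▸ h1)
      · exact Or.inl (e1 ▸ h2)
      · exact Or.inr ⟨e1.trans e2, h1.trans h2⟩
  · -- Property P1
    intro g δ hincr hbdd hMex
    obtain ⟨a, b, ha, hg⟩ := g.2
    obtain ⟨c, d, hc, hδ⟩ := δ.2
    obtain ⟨M, hMH⟩ := hMex
    have cδg : ∀ k : ℕ, ((δ * g ^ k : ↥AffPlus) : ℝ ≃o ℝ) = (δ : ℝ ≃o ℝ) * (g : ℝ ≃o ℝ) ^ k := by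
      intro k; push_cast; ring
    have hg1 : affLt 1 g := by
      have h12 : affLt (g ^ 1) (g ^ 2) := hincr 1 le_rfl
      have h3 := affLt_left_invariant g⁻¹ _ _ h12
      have e1 : g⁻¹ * g ^ 1 = 1 := by group
      have e2 : g⁻¹ * g ^ 2 = g := by group
      rwa [e1, e2] at h3
    have hone0 : ((1 : ↥AffPlus) : ℝ ≃o ℝ) 0 = 0 := rfl
    have hone1 : ((1 : ↥AffPlus) : ℝ ≃o ℝ) 1 = 1 := rfl
    rcases hg1 with hb | ⟨hb0, hab⟩
    · -- Case B : 0 < b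
      rw [hone0, hg 0] at hb
      have hbpos : 0 < b := by linarith
      have hlta : a < 1 := by
        by_contra hge
        push_neg at hge
        obtain ⟨h, hh⟩ := hbdd
        have key : ∀ n : ℕ, (n : ℝ) * b ≤ ((g : ℝ ≃o ℝ) ^ n) 0 ∧ 0 ≤ ((g : ℝ ≃o ℝ) ^ n) 0 := by
          intro n
          induction n with
          | zero => simp
          | succ n ih =>
            have hstep : ((g : ℝ ≃o ℝ) ^ (n + 1)) 0 = a * ((g : ℝ ≃o ℝ) ^ n) 0 + b := by
              rw [pow_succ']
              have e : ((g : ℝ ≃o ℝ) * (g : ℝ ≃o ℝ) ^ n) 0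
                  = (g : ℝ ≃o ℝ) (((g : ℝ ≃o ℝ) ^ n) 0) := rfl
              rw [e, hg]
            constructor
            · rw [hstep]; push_cast; nlinarith [ih.1, ih.2]
            · rw [hstep]; nlinarith [ih.2]
        obtain ⟨n, hn⟩ := exists_nat_gt ((h : ℝ ≃o ℝ) 0 / b)
        have hm1 : 1 ≤ max n 1 := le_max_right n 1
        have h2 : affLt (g ^ (max n 1)) h := (hh (max n 1) hm1).2
        have h2' : ((g : ℝ ≃o ℝ) ^ (max n 1)) 0 ≤ (h : ℝ ≃o ℝ) 0 := by
          rcases h2 with hx | ⟨hx, -⟩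
          · rw [affPlus_coe_pow] at hx; exact hx.le
          · rw [affPlus_coe_pow] at hx; exact hx.le
        have h3 := (key (max n 1)).1
        have h4 : (n : ℝ) ≤ ((max n 1 : ℕ) : ℝ) := Nat.cast_le.2 (le_max_left n 1)
        have h5 : (h : ℝ ≃o ℝ) 0 < n * b := (div_lt_iff₀ hbpos).mp hn
        nlinarith
      set L := b / (1 - a) with hLdef
      have h1a : (0 : ℝ) < 1 - a := by linarith
      have hL : b = (1 - a) * L := by rw [hLdef]; field_simp
      have hLpos : 0 < L := div_pos hbpos h1a
      have hgf : ∀ x, (g : ℝ ≃o ℝ) x = a * x + (1 - a) * L := by intro x; rw [hg, ← hL]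
      have hp := pow_aff _ a L hgf
      have hpinv := pow_aff _ a⁻¹ L (inv_aff _ a L ha hgf)
      have hainv : (1 : ℝ) < a⁻¹ := (one_lt_inv₀ ha).mpr hlta
      have hXval : ∀ k : ℕ, ((δ * g ^ k : ↥AffPlus) : ℝ ≃o ℝ) 0
          = c * ((1 - a ^ k) * L) + d := by
        intro k
        rw [cδg k]
        have e : ((δ : ℝ ≃o ℝ) * (g : ℝ ≃o ℝ) ^ k) 0
            = (δ : ℝ ≃o ℝ) (((g : ℝ ≃o ℝ) ^ k) 0) := rfl
        rw [e, hp k 0, hδ]; ring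
      have hXge : ∀ k : ℕ, M < k → L ≤ c * ((1 - a ^ k) * L) + d := by
        intro k hk
        by_contra hlt
        push_neg at hlt
        obtain ⟨m, hm⟩ := exists_pow_lt_of_lt_one
          (show (0 : ℝ) < (L - (c * ((1 - a ^ k) * L) + d)) / L from
            div_pos (by linarith) hLpos) hlta
        have ham : a ^ (max m (M + 1)) ≤ a ^ m :=
          pow_le_pow_of_le_one ha.le hlta.le (le_max_left _ _)
        have hMm : M < max m (M + 1) :=
          lt_of_lt_of_le (Nat.lt_succ_self M) (le_max_right m (M + 1))
        have hcmp := hMH k (max m (M + 1)) hk hMm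
        have hgm0 : ((g ^ (max m (M + 1)) : ↥AffPlus) : ℝ ≃o ℝ) 0
            = (1 - a ^ (max m (M + 1))) * L := by
          rw [affPlus_coe_pow, hp _ 0]; ring
        have hmL := (lt_div_iff₀ hLpos).mp hm
        have hkey : c * ((1 - a ^ k) * L) + d < (1 - a ^ (max m (M + 1))) * L := by
          nlinarith
        rcases hcmp with hx | ⟨hx, -⟩
        · rw [hgm0, hXval k] at hx; linarith
        · rw [hgm0, hXval k] at hx; linarith
      refine ⟨M + 2, fun k hk => Or.inr ?_⟩
      have hbk : a ^ k < a ^ (M + 1) := pow_lt_pow_right_of_lt_one₀ ha hlta (by omega)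
      have hXk : L < c * ((1 - a ^ k) * L) + d := by
        have h1 := hXge (M + 1) (Nat.lt_succ_self M)
        have h2 : c * L * a ^ k < c * L * a ^ (M + 1) :=
          mul_lt_mul_of_pos_left hbk (mul_pos hc hLpos)
        nlinarith
      have val : ∀ n : ℕ, ((g⁻¹ ^ n * δ * g ^ k : ↥AffPlus) : ℝ ≃o ℝ) 0
          = L + a⁻¹ ^ n * ((c * ((1 - a ^ k) * L) + d) - L) := by
        intro n
        have e : ((g⁻¹ ^ n * δ * g ^ k : ↥AffPlus) : ℝ ≃o ℝ)
            = (g : ℝ ≃o ℝ)⁻¹ ^ n * (δ : ℝ ≃o ℝ) * (g : ℝ ≃o ℝ) ^ k := by push_cast; ring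
        rw [e]
        have e2 : ((g : ℝ ≃o ℝ)⁻¹ ^ n * (δ : ℝ ≃o ℝ) * (g : ℝ ≃o ℝ) ^ k) 0
            = ((g : ℝ ≃o ℝ)⁻¹ ^ n) ((δ : ℝ ≃o ℝ) (((g : ℝ ≃o ℝ) ^ k) 0)) := rfl
        rw [e2, hp k 0, hδ, hpinv n]; ring
      constructor
      · intro n hn
        show affLt (g⁻¹ ^ n * δ * g ^ k) (g⁻¹ ^ (n + 1) * δ * g ^ k)
        left
        rw [val n, val (n + 1)]
        have hplt : a⁻¹ ^ n < a⁻¹ ^ (n + 1) := pow_lt_pow_right₀ hainv (Nat.lt_succ_self n)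
        nlinarith
      · intro h
        obtain ⟨n, hn⟩ := pow_unbounded_of_one_lt
          (((h : ℝ ≃o ℝ) 0 - L) / ((c * ((1 - a ^ k) * L) + d) - L)) hainv
        refine ⟨max n 1, le_max_right n 1, ?_⟩
        show affLt h (g⁻¹ ^ (max n 1) * δ * g ^ k)
        left
        rw [val (max n 1)]
        have h1 : a⁻¹ ^ n ≤ a⁻¹ ^ (max n 1) := pow_le_pow_right₀ hainv.le (le_max_left n 1)
        have h2 : (h : ℝ ≃o ℝ) 0 - L < a⁻¹ ^ n * ((c * ((1 - a ^ k) * L) + d) - L) := by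
          have := (div_lt_iff₀ (by linarith : (0 : ℝ) < (c * ((1 - a ^ k) * L) + d) - L)).mp hn
          linarith
        nlinarith
    · -- Case A : b = 0, 1 < a
      rw [hone0, hg 0] at hb0
      rw [hone1, hg 1] at hab
      have hb : b = 0 := by linarith
      have ha1 : 1 < a := by linarith
      have hgf : ∀ x, (g : ℝ ≃o ℝ) x = a * x + (1 - a) * 0 := by
        intro x; rw [hg, hb]; ring
      have hp := pow_aff _ a 0 hgf
      have hgn0 : ∀ n : ℕ, ((g ^ n : ↥AffPlus) : ℝ ≃o ℝ) 0 = 0 := by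
        intro n; rw [affPlus_coe_pow, hp n 0]; ring
      have hδg0 : ∀ k : ℕ, ((δ * g ^ k : ↥AffPlus) : ℝ ≃o ℝ) 0 = d := by
        intro k; rw [cδg k]
        have e : ((δ : ℝ ≃o ℝ) * (g : ℝ ≃o ℝ) ^ k) 0
            = (δ : ℝ ≃o ℝ) (((g : ℝ ≃o ℝ) ^ k) 0) := rfl
        rw [e, hp k 0, hδ]; ring
      have hd : 0 < d := by
        rcases lt_trichotomy 0 d with h | h | h
        · exact h
        · exfalso
          obtain ⟨m, hm⟩ := pow_unbounded_of_one_lt (c * a ^ (M + 1)) ha1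
          have hMm : M < max m (M + 1) :=
            lt_of_lt_of_le (Nat.lt_succ_self M) (le_max_right m (M + 1))
          have hcmp := hMH (M + 1) (max m (M + 1)) (Nat.lt_succ_self M) hMm
          rcases hcmp with hx | ⟨-, hx⟩
          · rw [hgn0, hδg0] at hx; linarith
          · have e1 : ((g ^ (max m (M + 1)) : ↥AffPlus) : ℝ ≃o ℝ) 1
                = a ^ (max m (M + 1)) := by
              rw [affPlus_coe_pow, hp _ 1]; ring
            have e2 : ((δ * g ^ (M + 1) : ↥AffPlus) : ℝ ≃o ℝ) 1 = c * a ^ (M + 1) := by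
              rw [cδg]
              have e : ((δ : ℝ ≃o ℝ) * (g : ℝ ≃o ℝ) ^ (M + 1)) 1
                  = (δ : ℝ ≃o ℝ) (((g : ℝ ≃o ℝ) ^ (M + 1)) 1) := rfl
              rw [e, hp _ 1, hδ, ← h]; ring
            rw [e1, e2] at hx
            have hle : a ^ m ≤ a ^ (max m (M + 1)) := pow_le_pow_right₀ ha1.le (le_max_left _ _)
            linarith
        · exfalso
          have hcmp := hMH (M + 1) (M + 1) (Nat.lt_succ_self M) (Nat.lt_succ_self M)
          rcases hcmp with hx | ⟨hx, -⟩ <;> rw [hgn0, hδg0] at hx <;> linarith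
      refine ⟨1, fun k hk => Or.inl ?_⟩
      have val : ∀ n : ℕ, ((g ^ n * δ * g ^ k : ↥AffPlus) : ℝ ≃o ℝ) 0 = a ^ n * d := by
        intro n
        have e : ((g ^ n * δ * g ^ k : ↥AffPlus) : ℝ ≃o ℝ)
            = (g : ℝ ≃o ℝ) ^ n * (δ : ℝ ≃o ℝ) * (g : ℝ ≃o ℝ) ^ k := by push_cast; ring
        rw [e]
        have e2 : ((g : ℝ ≃o ℝ) ^ n * (δ : ℝ ≃o ℝ) * (g : ℝ ≃o ℝ) ^ k) 0
            = ((g : ℝ ≃o ℝ) ^ n) ((δ : ℝ ≃o ℝ) (((g : ℝ ≃o ℝ) ^ k) 0)) := rfl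
        rw [e2, hp k 0, hδ, hp n]; ring
      constructor
      · intro n hn
        show affLt (g ^ n * δ * g ^ k) (g ^ (n + 1) * δ * g ^ k)
        left
        rw [val n, val (n + 1)]
        have hplt : a ^ n < a ^ (n + 1) := pow_lt_pow_right₀ ha1 (Nat.lt_succ_self n)
        nlinarith
      · intro h
        obtain ⟨n, hn⟩ := pow_unbounded_of_one_lt ((h : ℝ ≃o ℝ) 0 / d) ha1
        refine ⟨max n 1, le_max_right n 1, ?_⟩
        show affLt h (g ^ (max n 1) * δ * g ^ k)
        left
        rw [val (max n 1)]
        have h1 : a ^ n ≤ a ^ (max n 1) := pow_le_pow_right₀ ha1.le (le_max_left n 1)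
        have h2 := (div_lt_iff₀ hd).mp hn
        nlinarith
  · -- not Archimedean
    intro harch
    have hg2 : IsAffinePos (affMap 2 0 two_pos) := ⟨2, 0, two_pos, fun x => rfl⟩
    have hf1 : IsAffinePos (affMap 1 1 one_pos) := ⟨1, 1, one_pos, fun x => rfl⟩
    set f : ↥AffPlus := ⟨affMap 1 1 one_pos, hf1⟩
    set g : ↥AffPlus := ⟨affMap 2 0 two_pos, hg2⟩
    have h1f : affLt 1 f := by
      left
      show (1 : ℝ ≃o ℝ) 0 < affMap 1 1 one_pos 0
      rw [affMap_apply]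
      norm_num
    have h1g : affLt 1 g := by
      right
      constructor
      · show (1 : ℝ ≃o ℝ) 0 = affMap 2 0 two_pos 0
        rw [affMap_apply]; norm_num
      · show (1 : ℝ ≃o ℝ) 1 < affMap 2 0 two_pos 1
        rw [affMap_apply]; norm_num
    obtain ⟨n, hn⟩ := harch f g h1f h1g
    have hgp : ∀ x : ℝ, (g : ℝ ≃o ℝ) x = 2 * x + (1 - 2) * 0 := by
      intro x; rw [show (g : ℝ ≃o ℝ) = affMap 2 0 two_pos from rfl, affMap_apply]; ring
    have hgn : ((g ^ n : ↥AffPlus) : ℝ ≃o ℝ) 0 = 0 := by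
      rw [affPlus_coe_pow, pow_aff _ 2 0 hgp n 0]; ring
    have hf0 : (f : ℝ ≃o ℝ) 0 = 1 := by
      rw [show (f : ℝ ≃o ℝ) = affMap 1 1 one_pos from rfl, affMap_apply]; norm_num
    rcases hn with h | ⟨h, -⟩ <;> rw [hf0, hgn] at h <;> norm_num at h

end
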